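/- If r' is a proper prefix of a sequence r (r = r' • r'' with r'' nonempty, where • is concatenation possibly merging the last itemset) and both are contained in a q-sequence s, then for every instance of r in s whose r'-part ends at position p, u(r, instance, s) ≤ u(r', p, s) + ru(r', p, s), where ru(r', p, s) is the sum of utilities of all q-items in s strictly after the extension item at position p. -/
import Mathlib

/-- Decomposition bound: an instance of `r = r' • r''` whose `r'`-part ends at
extension position `p` (with extension item at linearized location `loc`) has
utility equal to the utility of its `r'`-part (which is at most `u(r',p,s)`)
plus the utilities of the matched items of `r''`, all lying strictly after
`loc`; hence it is at most `u(r',p,s) + ru(r',p,s)`. -/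
theorem inst_le_peu_at_pos {n : ℕ}
    (util : Fin n → ℝ)                  -- utilities of the linearized q-items of s
    (hpos : ∀ j, 0 < util j)
    (loc : Fin n)                       -- location of the extension item of r' at position p
    (M : Finset (Fin n))                -- q-items matched by r''
    (hM : ∀ j ∈ M, loc < j)
    (uPrefixInst : ℝ)                   -- utility of the r'-part of the instance
    (uP : ℝ)                            -- u(r', p, s): max instance utility at extension position p
    (hle : uPrefixInst ≤ uP)
    (uInst : ℝ)                         -- utility of the instance of r
    (hdec : uInst = uPrefixInst + ∑ j ∈ M, util j)
    (ru : ℝ)                            -- ru(r', p, s)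
    (hru : ru = ∑ j ∈ Finset.univ.filter (fun j => loc < j), util j) :
    uInst ≤ uP + ru := by
  subst hdec hru
  refine add_le_add hle (Finset.sum_le_sum_of_subset_of_nonneg ?_ ?_)
  · intro j hj; simpa using hM j hj
  · intro j _ _; exact (hpos j).le
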